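/- Let f: K → ℝ be twice continuously differentiable on a convex set K ⊂ ℝ₊ⁿ. If for all x ∈ K, the diagonal Hessian entries satisfy ∂²f/∂xᵢ²(x) ≤ -μ for all i, and the off-diagonal entries satisfy ∂²f/∂xᵢ∂xⱼ(x) ≤ 0 for all i ≠ j, then for all x ∈ K and all v ⪰ 0 with x+v ∈ K, f(x+v) ≤ f(x) + ⟨∇f(x), v⟩ - (μ/2)‖v‖₂². -/

import Mathlib

open Finset

/-- Twice differentiable function with diagonal Hessian entries ≤ -μ and non-positive
off-diagonal Hessian entries is μ-strongly DR-submodular w.r.t. the Euclidean norm. -/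
theorem stmt_0 (n : ℕ) (K : Set (Fin n → ℝ)) (hKconv : Convex ℝ K)
    (hKpos : ∀ x ∈ K, ∀ i, 0 ≤ x i) (μ : ℝ) (hμ : 0 ≤ μ)
    (f : (Fin n → ℝ) → ℝ)
    (f' : (Fin n → ℝ) → (Fin n → ℝ) →L[ℝ] ℝ)
    (H : (Fin n → ℝ) → (Fin n → ℝ) →L[ℝ] (Fin n → ℝ) →L[ℝ] ℝ)
    (hf' : ∀ x ∈ K, HasFDerivWithinAt f (f' x) K x)
    (hH : ∀ x ∈ K, HasFDerivWithinAt f' (H x) K x)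
    (hHcont : ContinuousOn H K)
    (hdiag : ∀ x ∈ K, ∀ i, H x (Pi.single i 1) (Pi.single i 1) ≤ -μ)
    (hoff : ∀ x ∈ K, ∀ i j, i ≠ j → H x (Pi.single i 1) (Pi.single j 1) ≤ 0) :
    ∀ x ∈ K, ∀ v : Fin n → ℝ, (∀ i, 0 ≤ v i) → x + v ∈ K →
      f (x + v) ≤ f x + f' x v - μ / 2 * ∑ i, (v i) ^ 2 := by
  intro x hx v hv hxv
  set S : ℝ := ∑ i, (v i) ^ 2 with hS
  set γ : ℝ → (Fin n → ℝ) := fun t => x + t • v with hγ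
  have hmem : ∀ t ∈ Set.Icc (0:ℝ) 1, γ t ∈ K := by
    intro t ht
    have := hKconv hx hxv (by linarith [ht.2] : (0:ℝ) ≤ 1 - t) ht.1 (by ring)
    convert this using 1
    simp only [hγ, smul_add]
    module
  have hγd : ∀ t : ℝ, HasDerivAt γ v t := by
    intro t
    simpa [hγ] using ((hasDerivAt_id t).smul_const v).const_add x
  have hv' : v = ∑ i, v i • (Pi.single i 1 : Fin n → ℝ) := by
    ext j
    rw [Finset.sum_apply]
    simp [Pi.single_apply]
  -- quadratic form bound
  have hquad : ∀ y ∈ K, H y v v ≤ -μ * S := by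
    intro y hy
    have key : H y v v = ∑ i, ∑ j, v i * v j * H y (Pi.single i 1) (Pi.single j 1) := by
      conv_lhs => rw [hv']
      rw [map_sum, Finset.sum_comm]
      refine Finset.sum_congr rfl fun j _ => ?_
      rw [map_smul, smul_eq_mul, map_sum, ContinuousLinearMap.sum_apply, Finset.mul_sum]
      refine Finset.sum_congr rfl fun i _ => ?_
      rw [map_smul, ContinuousLinearMap.smul_apply, smul_eq_mul]
      ring
    rw [key]
    calc ∑ i, ∑ j, v i * v j * H y (Pi.single i 1) (Pi.single j 1)
        ≤ ∑ i, -μ * (v i)^2 := by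
          apply Finset.sum_le_sum
          intro i _
          calc ∑ j, v i * v j * H y (Pi.single i 1) (Pi.single j 1)
              ≤ ∑ j, (if j = i then -μ * (v i)^2 else 0) := by
                apply Finset.sum_le_sum
                intro j _
                by_cases hij : j = i
                · subst hij
                  simp only [if_pos rfl]
                  have h1 := hdiag y hy j
                  calc v j * v j * H y (Pi.single j 1) (Pi.single j 1)
                      ≤ v j * v j * (-μ) :=
                        mul_le_mul_of_nonneg_left h1 (mul_nonneg (hv j) (hv j))
                    _ = -μ * (v j)^2 := by ring
                · simp only [if_neg hij]
                  exact mul_nonpos_of_nonneg_of_nonpos (mul_nonneg (hv i) (hv j))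
                    (hoff y hy i j (Ne.symm hij))
            _ = -μ * (v i)^2 := by simp
      _ = -μ * S := by rw [hS, Finset.mul_sum]
  -- derivatives along the path
  have hg : ∀ t ∈ Set.Icc (0:ℝ) 1, HasDerivWithinAt (fun t => f (γ t)) (f' (γ t) v)
      (Set.Icc (0:ℝ) 1) t := by
    intro t ht
    exact (hf' (γ t) (hmem t ht)).comp_hasDerivWithinAt t ((hγd t).hasDerivWithinAt) hmem
  have hg1 : ∀ t ∈ Set.Icc (0:ℝ) 1, HasDerivWithinAt (fun t => f' (γ t) v) (H (γ t) v v)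
      (Set.Icc (0:ℝ) 1) t := by
    intro t ht
    have h1 : HasDerivWithinAt (fun t => f' (γ t)) (H (γ t) v) (Set.Icc (0:ℝ) 1) t :=
      (hH (γ t) (hmem t ht)).comp_hasDerivWithinAt t ((hγd t).hasDerivWithinAt) hmem
    have := (ContinuousLinearMap.apply ℝ ℝ v).hasFDerivAt.comp_hasDerivWithinAt t h1
    exact this
  set φ : ℝ → ℝ := fun t => f' (γ t) v - f' (γ 0) v + μ * t * S with hφ
  have hφd : ∀ t ∈ Set.Icc (0:ℝ) 1,
      HasDerivWithinAt φ (H (γ t) v v + μ * S) (Set.Icc (0:ℝ) 1) t := by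
    intro t ht
    have h2 : HasDerivWithinAt (fun t : ℝ => μ * t * S) (μ * S) (Set.Icc (0:ℝ) 1) t := by
      simpa using ((hasDerivWithinAt_id t (Set.Icc (0:ℝ) 1)).const_mul μ).mul_const S
    exact ((hg1 t ht).sub_const _).add h2
  have hφanti : AntitoneOn φ (Set.Icc (0:ℝ) 1) := by
    refine antitoneOn_of_hasDerivWithinAt_nonpos (convex_Icc 0 1)
      (fun t ht => (hφd t ht).continuousWithinAt)
      (fun t ht => (hφd t (interior_subset ht)).mono interior_subset) ?_
    intro t ht
    rw [interior_Icc] at ht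
    have := hquad (γ t) (hmem t (Set.Ioo_subset_Icc_self ht))
    linarith
  have hφle : ∀ t ∈ Set.Icc (0:ℝ) 1, φ t ≤ 0 := by
    intro t ht
    have h0 : φ 0 = 0 := by simp [hφ]
    have := hφanti (Set.left_mem_Icc.2 zero_le_one) ht ht.1
    rwa [h0] at this
  set ψ : ℝ → ℝ := fun t => f (γ t) - f (γ 0) - t * f' (γ 0) v + μ / 2 * t ^ 2 * S with hψ
  have hψd : ∀ t ∈ Set.Icc (0:ℝ) 1, HasDerivWithinAt ψ (φ t) (Set.Icc (0:ℝ) 1) t := by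
    intro t ht
    have hpow : HasDerivWithinAt (fun t : ℝ => μ / 2 * t ^ 2 * S) (μ * t * S)
        (Set.Icc (0:ℝ) 1) t := by
      have := (((hasDerivWithinAt_id t (Set.Icc (0:ℝ) 1)).pow 2).const_mul (μ / 2)).mul_const S
      refine this.congr_deriv ?_
      simp only [id_eq]
      ring
    have := (((hg t ht).sub_const (f (γ 0))).sub
      ((hasDerivWithinAt_id t (Set.Icc (0:ℝ) 1)).mul_const (f' (γ 0) v))).add hpow
    refine this.congr_deriv ?_
    simp only [hφ, id_eq]
    ring
  have hψanti : AntitoneOn ψ (Set.Icc (0:ℝ) 1) :=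
    antitoneOn_of_hasDerivWithinAt_nonpos (convex_Icc 0 1)
      (fun t ht => (hψd t ht).continuousWithinAt)
      (fun t ht => (hψd t (interior_subset ht)).mono interior_subset)
      (fun t ht => hφle t (interior_subset ht))
  have h1 := hψanti (Set.left_mem_Icc.2 zero_le_one) (Set.right_mem_Icc.2 zero_le_one) zero_le_one
  have hψ0 : ψ 0 = 0 := by simp [hψ]
  rw [hψ0] at h1
  have hγ0 : γ 0 = x := by simp [hγ]
  have hγ1 : γ 1 = x + v := by simp [hγ]
  simp only [hψ, hγ0, hγ1, one_pow, one_mul, mul_one] at h1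
  linarith
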